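/- Let E and F be ordered vector spaces with F a Dedekind complete Riesz space, G a majorizing subspace of E, and T : G → F monotone sublinear. Then the map p(x) = inf{T(y) : y ∈ G, x ≤ y} is subadditive and positively homogeneous on E, and agrees with T on G. -/

import Mathlib

/-- for `G` majorizing and `T : G → F` monotone sublinear, the map
`p x = inf {T y : y ∈ G, x ≤ y}` is subadditive, positively homogeneous and
agrees with `T` on `G`. -/
theorem stmt_15 {E F : Type*}
    [AddCommGroup E] [PartialOrder E] [Module ℝ E]
    [CovariantClass E E (· + ·) (· ≤ ·)] [PosSMulMono ℝ E]
    [ConditionallyCompleteLattice F] [AddCommGroup F] [Module ℝ F]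
    [CovariantClass F F (· + ·) (· ≤ ·)] [PosSMulMono ℝ F]
    (G : Submodule ℝ E)
    (hGmaj : ∀ x : E, ∃ y : G, x ≤ (y : E))
    (T : G → F)
    (hTmono : ∀ a b : G, (a : E) ≤ (b : E) → T a ≤ T b)
    (hTsub : ∀ a b : G, T (a + b) ≤ T a + T b)
    (hThom : ∀ (l : ℝ) (a : G), 0 ≤ l → T (l • a) = l • T a)
    (p : E → F)
    (hp : ∀ x : E, IsGLB {v : F | ∃ y : G, x ≤ (y : E) ∧ v = T y} (p x)) :
    (∀ x y : E, p (x + y) ≤ p x + p y) ∧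
    (∀ (l : ℝ) (x : E), 0 ≤ l → p (l • x) = l • p x) ∧
    (∀ a : G, p (a : E) = T a) := by
  -- cancellation helpers for `F`
  have hcancel : ∀ a b c : F, a + c ≤ b + c → a ≤ b := by
    intro a b c h
    have h2 := add_le_add_left h (-c)
    simpa [add_comm _ c, neg_add_cancel_left] using h2
  have hsub1 : ∀ a b c : F, a ≤ b + c → a - c ≤ b := by
    intro a b c h
    refine hcancel _ _ c ?_
    simpa [sub_add_cancel] using h
  have hsub2 : ∀ a b c : F, a - c ≤ b → a ≤ b + c := by
    intro a b c h
    have h2 := add_le_add (le_refl c) h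
    calc a = c + (a - c) := by abel
    _ ≤ c + b := h2
    _ = b + c := add_comm _ _
  -- agreement on G
  have hagree : ∀ a : G, p (a : E) = T a := by
    intro a
    refine (hp (a : E)).unique ⟨?_, ?_⟩
    · rintro v ⟨y, hay, rfl⟩
      exact hTmono a y hay
    · intro w hw
      exact hw ⟨a, le_rfl, rfl⟩
  refine ⟨?_, ?_, hagree⟩
  · -- subadditivity
    intro x y
    have key : ∀ y1 y2 : G, x ≤ (y1 : E) → y ≤ (y2 : E) →
        p (x + y) ≤ T y1 + T y2 := by
      intro y1 y2 h1 h2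
      have hmem : T (y1 + y2) ∈ {v : F | ∃ z : G, x + y ≤ (z : E) ∧ v = T z} :=
        ⟨y1 + y2, add_le_add h1 h2, rfl⟩
      exact le_trans ((hp (x + y)).1 hmem) (hTsub y1 y2)
    have step1 : ∀ y2 : G, y ≤ (y2 : E) → p (x + y) - T y2 ≤ p x := by
      intro y2 h2
      refine (hp x).2 ?_
      rintro v ⟨y1, h1, rfl⟩
      exact hsub1 _ _ _ (key y1 y2 h1 h2)
    have step2 : p (x + y) - p x ≤ p y := by
      refine (hp y).2 ?_
      rintro v ⟨y2, h2, rfl⟩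
      refine hsub1 _ _ _ ?_
      have := hsub2 _ _ _ (step1 y2 h2)
      calc p (x + y) ≤ p x + T y2 := this
      _ = T y2 + p x := add_comm _ _
    have := hsub2 _ _ _ step2
    calc p (x + y) ≤ p y + p x := this
    _ = p x + p y := add_comm _ _
  · -- positive homogeneity
    intro l x hl
    rcases hl.eq_or_lt with rfl | hl
    · -- l = 0
      have T0 : T 0 = 0 := by
        have := hThom 0 0 le_rfl
        simpa using this
      have p0 : p (0 : E) = 0 := by
        refine (hp 0).unique ⟨?_, ?_⟩
        · rintro v ⟨y, hy, rfl⟩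
          have : T 0 ≤ T y := hTmono 0 y (by simpa using hy)
          simpa [T0] using this
        · intro w hw
          exact hw ⟨0, by simp, T0.symm⟩
      simp [p0]
    · -- l > 0
      have hl' : 0 < l := hl
      -- order isomorphism of F given by scalar multiplication by l
      let e : F ≃o F :=
        { toFun := fun v => l • v
          invFun := fun v => l⁻¹ • v
          left_inv := fun v => by simp [smul_smul, inv_mul_cancel₀ hl'.ne']
          right_inv := fun v => by simp [smul_smul, mul_inv_cancel₀ hl'.ne']
          map_rel_iff' := by
            intro a b
            constructor
            · intro h
              have := smul_le_smul_of_nonneg_left h (le_of_lt (inv_pos.mpr hl'))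
              simpa [smul_smul, inv_mul_cancel₀ hl'.ne'] using this
            · intro h
              exact smul_le_smul_of_nonneg_left h hl'.le }
      have hset : {v : F | ∃ y : G, l • x ≤ (y : E) ∧ v = T y} =
          e '' {v : F | ∃ y : G, x ≤ (y : E) ∧ v = T y} := by
        ext v
        constructor
        · rintro ⟨y, hy, rfl⟩
          refine ⟨T (l⁻¹ • y), ⟨l⁻¹ • y, ?_, rfl⟩, ?_⟩
          · have := smul_le_smul_of_nonneg_left hy (le_of_lt (inv_pos.mpr hl'))
            simpa [smul_smul, inv_mul_cancel₀ hl'.ne'] using this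
          · show l • T (l⁻¹ • y) = T y
            rw [← hThom l _ hl'.le]
            congr 1
            simp [smul_smul, mul_inv_cancel₀ hl'.ne']
        · rintro ⟨v, ⟨z, hz, rfl⟩, rfl⟩
          refine ⟨l • z, ?_, ?_⟩
          · exact smul_le_smul_of_nonneg_left hz hl'.le
          · show l • T z = T (l • z)
            exact (hThom l z hl'.le).symm
      have h1 : IsGLB (e '' {v : F | ∃ y : G, x ≤ (y : E) ∧ v = T y}) (e (p x)) :=
        e.isGLB_image'.mpr (hp x)
      have h2 := hp (l • x)
      rw [hset] at h2
      exact h2.unique h1
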